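/- Fix d ∈ ℕ and a commutative ring R. For symmetric polynomials f₁ ∈ R[x₁,…,xₙ]^{Sₙ} and f₂ ∈ R[x₁,…,x_m]^{S_m}, define (f₁·f₂)(x₁,…,x_{n+m}) := Σ f₁(x_{i₁},…,x_{iₙ}) f₂(x_{j₁},…,x_{j_m}) ∏_{k,l} (x_{j_l} − x_{i_k})^{d−1}, the sum over all shuffles, i.e. all partitions {1,…,n+m} = {i₁<…<iₙ} ⊔ {j₁<…<j_m} (assume d ≥ 1 so the kernel is polynomial). Then this product is associative. -/

import Mathlib

open MvPolynomial

/-- The shuffle product on symmetric polynomials: the multiplication of the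
Cohomological Hall algebra of the quiver with one vertex and `d` loops. -/
noncomputable def shuffleMul {R : Type*} [CommRing R] (d n m : ℕ)
    (f₁ : MvPolynomial (Fin n) R) (f₂ : MvPolynomial (Fin m) R) :
    MvPolynomial (Fin (n + m)) R :=
  ∑ s : {s : Finset (Fin (n + m)) // s.card = n},
    (rename (fun i => ((s.1.orderIsoOfFin s.2 i : s.1) : Fin (n + m))) f₁) *
    (rename (fun j => (((s.1ᶜ).orderIsoOfFin
        (by rw [Finset.card_compl, s.2, Fintype.card_fin]; omega) j : (s.1ᶜ : Finset (Fin (n+m)))) : Fin (n + m))) f₂) *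
    ∏ i ∈ s.1, ∏ j ∈ s.1ᶜ, (X j - X i) ^ (d - 1)

open Finset

section Aux
variable {R : Type*} [CommRing R]

/-- kernel polynomial -/
noncomputable def chKer (R : Type*) [CommRing R] (d : ℕ) {N : ℕ} (A B : Finset (Fin N)) :
    MvPolynomial (Fin N) R :=
  ∏ i ∈ A, ∏ j ∈ B, (X j - X i) ^ (d - 1)

lemma rename_chKer {N M : ℕ} (f : Fin N → Fin M) (hf : Function.Injective f) (d : ℕ)
    (A B : Finset (Fin N)) :
    rename f (chKer R d A B) = chKer R d (A.image f) (B.image f) := by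
  simp only [chKer, map_prod, map_pow, map_sub, rename_X]
  rw [Finset.prod_image (fun x _ y _ h => hf h)]
  refine Finset.prod_congr rfl fun i _ => ?_
  rw [Finset.prod_image (fun x _ y _ h => hf h)]

lemma chKer_union_left {N : ℕ} (d : ℕ) {A B : Finset (Fin N)} (C : Finset (Fin N))
    (h : Disjoint A B) : chKer R d (A ∪ B) C = chKer R d A C * chKer R d B C :=
  Finset.prod_union h

lemma chKer_union_right {N : ℕ} (d : ℕ) (A : Finset (Fin N)) {B C : Finset (Fin N)}
    (h : Disjoint B C) : chKer R d A (B ∪ C) = chKer R d A B * chKer R d A C := by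
  simp only [chKer, Finset.prod_union h, Finset.prod_mul_distrib]

lemma orderEmbOfFin_congr {α : Type*} [LinearOrder α] {s s' : Finset α} {k : ℕ}
    (hss : s = s') (h : s.card = k) (x : Fin k) :
    s.orderEmbOfFin h x = s'.orderEmbOfFin (hss ▸ h) x := by subst hss; rfl

end Aux


section Expand
variable {R : Type*} [CommRing R]

lemma rename_shuffleMul {N a b : ℕ} (g : Fin (a + b) → Fin N) (hg : StrictMono g)
    (d : ℕ) (g₁ : MvPolynomial (Fin a) R) (g₂ : MvPolynomial (Fin b) R) :
    rename g (shuffleMul d a b g₁ g₂) =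
      ∑ s : {s : Finset (Fin (a + b)) // s.card = a},
        rename ((s.1.image g).orderEmbOfFin
            (by rw [Finset.card_image_of_injective _ hg.injective, s.2])) g₁ *
        rename (((s.1ᶜ).image g).orderEmbOfFin
            (by rw [Finset.card_image_of_injective _ hg.injective, Finset.card_compl, s.2,
                Fintype.card_fin]; omega)) g₂ *
        chKer R d (s.1.image g) ((s.1ᶜ).image g) := by
  unfold shuffleMul
  rw [map_sum]
  refine Finset.sum_congr rfl fun s _ => ?_
  simp only [Finset.coe_orderIsoOfFin_apply]
  rw [map_mul, map_mul, rename_rename, rename_rename,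
    show (∏ i ∈ s.1, ∏ j ∈ s.1ᶜ, ((X j - X i) ^ (d-1) : MvPolynomial (Fin (a+b)) R)) =
      chKer R d s.1 s.1ᶜ from rfl, rename_chKer _ hg.injective]
  refine congrArg₂ (· * ·) (congrArg₂ (· * ·) ?_ ?_) rfl
  · refine congrArg (fun F => rename F g₁) (Finset.orderEmbOfFin_unique _
      (fun x => Finset.mem_image_of_mem _ (Finset.orderEmbOfFin_mem _ _ _)) ?_)
    exact hg.comp (s.1.orderEmbOfFin s.2).strictMono
  · refine congrArg (fun F => rename F g₂) (Finset.orderEmbOfFin_unique _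
      (fun x => Finset.mem_image_of_mem _ (Finset.orderEmbOfFin_mem _ _ _)) ?_)
    exact hg.comp ((s.1ᶜ).orderEmbOfFin _).strictMono

end Expand

section Helpers
variable {R : Type*} [CommRing R]

lemma image_univ_orderEmbOfFin {N k : ℕ} (s : Finset (Fin N)) (h : s.card = k) :
    Finset.univ.image ⇑(s.orderEmbOfFin h) = s := by
  rw [← Finset.coe_inj, Finset.coe_image, Finset.coe_univ, Set.image_univ,
    Finset.range_orderEmbOfFin]

lemma image_compl_of_injective {k N : ℕ} {g : Fin k → Fin N} (hg : Function.Injective g)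
    (s : Finset (Fin k)) :
    (sᶜ).image g = Finset.univ.image g \ s.image g := by
  ext y
  simp only [Finset.mem_image, Finset.mem_sdiff, Finset.mem_compl, Finset.mem_univ, true_and]
  constructor
  · rintro ⟨x, hx, rfl⟩
    exact ⟨⟨x, rfl⟩, fun ⟨z, hz, hzx⟩ => hx (hg hzx ▸ hz)⟩
  · rintro ⟨⟨x, rfl⟩, hy⟩
    exact ⟨x, fun hx => hy ⟨x, hx, rfl⟩, rfl⟩

lemma image_compl_equiv {N M : ℕ} (e : Fin N ≃ Fin M) (s : Finset (Fin N)) :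
    (sᶜ).image ⇑e = (s.image ⇑e)ᶜ := by
  rw [image_compl_of_injective e.injective, Finset.image_univ_equiv,
    Finset.compl_eq_univ_sdiff]

lemma image_filter_mem {k N : ℕ} {g : Fin k → Fin N} (hg : Function.Injective g)
    {A : Finset (Fin N)} (hA : A ⊆ Finset.univ.image g) :
    (Finset.univ.filter (fun x => g x ∈ A)).image g = A := by
  rw [← Finset.filter_image (p := (· ∈ A)), Finset.filter_mem_eq_inter,
    Finset.inter_eq_right.mpr hA]

lemma rename_orderEmbOfFin_congr {N k : ℕ} {s s' : Finset (Fin N)} (hss : s = s')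
    (h : s.card = k) (h' : s'.card = k) (f : MvPolynomial (Fin k) R) :
    rename (⇑(s.orderEmbOfFin h)) f = rename (⇑(s'.orderEmbOfFin h')) f := by
  subst hss; rfl

end Helpers

section Main
variable {R : Type*} [CommRing R]

abbrev PairIdx (N n m : ℕ) :=
  {q : Finset (Fin N) × Finset (Fin N) // q.1.card = n ∧ q.2.card = m ∧ Disjoint q.1 q.2}

lemma card_compl_union {N n m p : ℕ} (hN : Fintype.card (Fin N) = n + m + p)
    {A B : Finset (Fin N)} (hA : A.card = n) (hB : B.card = m) (hAB : Disjoint A B) :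
    ((A ∪ B)ᶜ).card = p := by
  rw [Finset.card_compl, Finset.card_union_of_disjoint hAB, hA, hB, hN]; omega

noncomputable def trm (d n m p : ℕ) (f₁ : MvPolynomial (Fin n) R)
    (f₂ : MvPolynomial (Fin m) R) (f₃ : MvPolynomial (Fin p) R)
    (q : PairIdx (n + (m + p)) n m) : MvPolynomial (Fin (n + (m + p))) R :=
  rename (⇑(q.1.1.orderEmbOfFin q.2.1)) f₁ *
  rename (⇑(q.1.2.orderEmbOfFin q.2.2.1)) f₂ *
  rename (⇑(((q.1.1 ∪ q.1.2)ᶜ).orderEmbOfFin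
    (card_compl_union ((Fintype.card_fin _).trans (Nat.add_assoc n m p).symm) q.2.1 q.2.2.1 q.2.2.2))) f₃ *
  (chKer R d q.1.1 q.1.2 * chKer R d q.1.1 (q.1.1 ∪ q.1.2)ᶜ *
    chKer R d q.1.2 (q.1.1 ∪ q.1.2)ᶜ)

lemma shuffleMul_eq_sum (d a b : ℕ) (g₁ : MvPolynomial (Fin a) R)
    (g₂ : MvPolynomial (Fin b) R) :
    shuffleMul d a b g₁ g₂ = ∑ s : {s : Finset (Fin (a + b)) // s.card = a},
      rename (⇑(s.1.orderEmbOfFin s.2)) g₁ *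
      rename (⇑((s.1ᶜ).orderEmbOfFin
        (by rw [Finset.card_compl, s.2, Fintype.card_fin]; omega))) g₂ *
      chKer R d s.1 s.1ᶜ := by
  unfold shuffleMul
  refine Finset.sum_congr rfl fun s _ => ?_
  rfl

end Main

section Equivs
variable (n m p : ℕ)

/-- the order-preserving cast `Fin (n+m+p) ≃ Fin (n+(m+p))` -/
abbrev eA : Fin (n + m + p) ≃ Fin (n + (m + p)) := finCongr (Nat.add_assoc n m p)

lemma eA_strictMono : StrictMono ⇑(eA n m p) := fun x y h => by
  rw [Fin.lt_def]
  rw [Fin.lt_def] at h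
  simpa using h

lemma card_image_eA {S : Finset (Fin (n + m + p))} {k : ℕ} (hS : S.card = k) :
    (S.image ⇑(eA n m p)).card = k := by
  rw [Finset.card_image_of_injective _ (eA n m p).injective, hS]

/-- The `g` map used for LHS terms: embed `Fin (n+m)` as the set `S.image eA`. -/
abbrev gL (S : Finset (Fin (n + m + p))) (hS : S.card = n + m) :
    Fin (n + m) → Fin (n + (m + p)) :=
  ⇑((S.image ⇑(eA n m p)).orderEmbOfFin (card_image_eA n m p hS))

lemma gL_inj (S : Finset (Fin (n + m + p))) (hS : S.card = n + m) :
    Function.Injective (gL n m p S hS) :=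
  ((S.image ⇑(eA n m p)).orderEmbOfFin _).injective

lemma gL_image_univ (S : Finset (Fin (n + m + p))) (hS : S.card = n + m) :
    Finset.univ.image (gL n m p S hS) = S.image ⇑(eA n m p) :=
  image_univ_orderEmbOfFin _ _

lemma image_symm_image (A : Finset (Fin (n + (m + p)))) :
    (A.image ⇑(eA n m p).symm).image ⇑(eA n m p) = A := by
  rw [Finset.image_image, Equiv.self_comp_symm, Finset.image_id]

noncomputable def ΦL :
    ({S : Finset (Fin (n + m + p)) // S.card = n + m} ×
      {t : Finset (Fin (n + m)) // t.card = n}) ≃ PairIdx (n + (m + p)) n m where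
  toFun x := ⟨(x.2.1.image (gL n m p x.1.1 x.1.2), (x.2.1ᶜ).image (gL n m p x.1.1 x.1.2)),
    by rw [Finset.card_image_of_injective _ (gL_inj n m p _ _), x.2.2],
    by rw [Finset.card_image_of_injective _ (gL_inj n m p _ _), Finset.card_compl, x.2.2,
        Fintype.card_fin]; omega,
    (Finset.disjoint_image (gL_inj n m p _ _)).mpr disjoint_compl_right⟩
  invFun q :=
    (⟨(q.1.1 ∪ q.1.2).image ⇑(eA n m p).symm,
      by rw [Finset.card_image_of_injective _ (eA n m p).symm.injective,
          Finset.card_union_of_disjoint q.2.2.2, q.2.1, q.2.2.1]⟩,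
     ⟨Finset.univ.filter (fun i => gL n m p ((q.1.1 ∪ q.1.2).image ⇑(eA n m p).symm)
        (by rw [Finset.card_image_of_injective _ (eA n m p).symm.injective,
          Finset.card_union_of_disjoint q.2.2.2, q.2.1, q.2.2.1]) i ∈ q.1.1),
      by
        set g := gL n m p ((q.1.1 ∪ q.1.2).image ⇑(eA n m p).symm) _ with hg
        have hU : Finset.univ.image g = q.1.1 ∪ q.1.2 := by
          rw [hg, gL_image_univ, image_symm_image]
        have hsub : q.1.1 ⊆ Finset.univ.image g := hU ▸ Finset.subset_union_left
        have := image_filter_mem (gL_inj n m p _ _) hsub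
        rw [← Finset.card_image_of_injective
          (Finset.univ.filter (fun i => g i ∈ q.1.1)) (gL_inj n m p _ (by rw [Finset.card_image_of_injective _ (eA n m p).symm.injective,
            Finset.card_union_of_disjoint q.2.2.2, q.2.1, q.2.2.1])), this, q.2.1]⟩)
  left_inv := by
    rintro ⟨⟨S, hS⟩, ⟨t, ht⟩⟩
    set g := gL n m p S hS with hgdef
    have hAB : t.image g ∪ tᶜ.image g = S.image ⇑(eA n m p) := by
      rw [← Finset.image_union, Finset.union_compl, gL_image_univ]
    have hS' : (t.image g ∪ tᶜ.image g).image ⇑(eA n m p).symm = S := by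
      rw [hAB, Finset.image_image, Equiv.symm_comp_self, Finset.image_id]
    refine Prod.ext (Subtype.ext hS') (Subtype.ext ?_)
    have hgpt : ∀ pf' i, gL n m p ((t.image g ∪ tᶜ.image g).image ⇑(eA n m p).symm) pf' i
        = g i := fun pf' i => by
      exact orderEmbOfFin_congr (by rw [hS']) _ i
    simp only [hgdef] at hgpt
    simp only [hgpt]
    rw [Finset.filter_congr (fun i _ => by
      rw [hgpt _ i, (gL_inj n m p S hS).mem_finset_image (s := t)]
      exact (congrArg Finset.card hS').trans hS),
      Finset.filter_mem_eq_inter, Finset.univ_inter]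
  right_inv := by
    rintro ⟨⟨A, B⟩, hA, hB, hAB⟩
    set S' := (A ∪ B).image ⇑(eA n m p).symm with hS'def
    have hU : ∀ pf', Finset.univ.image (gL n m p S' pf') = A ∪ B := fun pf' => by
      rw [gL_image_univ, hS'def, image_symm_image]
    dsimp only
    refine Subtype.ext (Prod.ext ?_ ?_)
    all_goals dsimp only
    · refine image_filter_mem (gL_inj n m p _ _) ?_
      rw [hU]
      exact Finset.subset_union_left
    · have pfS : S'.card = n + m := by
        rw [hS'def, Finset.card_image_of_injective _ (eA n m p).symm.injective,
          Finset.card_union_of_disjoint hAB, hA, hB]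
      rw [image_compl_of_injective (gL_inj n m p S' pfS), hU pfS,
        image_filter_mem (gL_inj n m p S' pfS) (by rw [hU pfS]; exact Finset.subset_union_left)]
      exact Finset.union_sdiff_cancel_left hAB

lemma card_compl_fin {N k : ℕ} {A : Finset (Fin N)} (hA : A.card = k) :
    (Aᶜ).card = N - k := by
  rw [Finset.card_compl, hA, Fintype.card_fin]

/-- The `g` map used for RHS terms: embed `Fin (m+p)` as the set `Aᶜ`. -/
abbrev gR (A : Finset (Fin (n + (m + p)))) (hA : A.card = n) :
    Fin (m + p) → Fin (n + (m + p)) :=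
  ⇑((Aᶜ).orderEmbOfFin (by rw [card_compl_fin hA]; omega))

lemma gR_inj (A : Finset (Fin (n + (m + p)))) (hA : A.card = n) :
    Function.Injective (gR n m p A hA) :=
  ((Aᶜ).orderEmbOfFin _).injective

lemma gR_image_univ (A : Finset (Fin (n + (m + p)))) (hA : A.card = n) :
    Finset.univ.image (gR n m p A hA) = Aᶜ :=
  image_univ_orderEmbOfFin _ _

lemma subset_compl_of_disjoint {N : ℕ} {A B : Finset (Fin N)} (h : Disjoint A B) :
    B ⊆ Aᶜ := fun x hx =>
  Finset.mem_compl.mpr (fun hxA => Finset.disjoint_left.mp h hxA hx)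

noncomputable def ΨR :
    ({A : Finset (Fin (n + (m + p))) // A.card = n} ×
      {u : Finset (Fin (m + p)) // u.card = m}) ≃ PairIdx (n + (m + p)) n m where
  toFun x := ⟨(x.1.1, x.2.1.image (gR n m p x.1.1 x.1.2)), x.1.2,
    by rw [Finset.card_image_of_injective _ (gR_inj n m p _ _), x.2.2],
    Disjoint.mono_right
      ((gR_image_univ n m p x.1.1 x.1.2) ▸ Finset.image_subset_image (Finset.subset_univ _))
      disjoint_compl_right⟩
  invFun q := (⟨q.1.1, q.2.1⟩,
    ⟨Finset.univ.filter (fun i => gR n m p q.1.1 q.2.1 i ∈ q.1.2),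
      by
        have hsub : q.1.2 ⊆ Finset.univ.image (gR n m p q.1.1 q.2.1) := by
          rw [gR_image_univ]; exact subset_compl_of_disjoint q.2.2.2
        rw [← Finset.card_image_of_injective
          (Finset.univ.filter (fun i => gR n m p q.1.1 q.2.1 i ∈ q.1.2)) (gR_inj n m p q.1.1 q.2.1),
          image_filter_mem (gR_inj n m p _ _) hsub, q.2.2.1]⟩)
  left_inv := by
    rintro ⟨⟨A, hA⟩, ⟨u, hu⟩⟩
    refine Prod.ext (Subtype.ext rfl) (Subtype.ext ?_)
    dsimp only
    rw [Finset.filter_congr (fun i _ => by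
      rw [(gR_inj n m p A hA).mem_finset_image (s := u)]),
      Finset.filter_mem_eq_inter, Finset.univ_inter]
  right_inv := by
    rintro ⟨⟨A, B⟩, hA, hB, hAB⟩
    dsimp only
    refine Subtype.ext (Prod.ext rfl ?_)
    dsimp only
    refine image_filter_mem (gR_inj n m p _ _) ?_
    rw [gR_image_univ]
    exact subset_compl_of_disjoint hAB

end Equivs

section MainLemmas
variable {R : Type*} [CommRing R] (d n m p : ℕ)
variable (f₁ : MvPolynomial (Fin n) R) (f₂ : MvPolynomial (Fin m) R)
variable (f₃ : MvPolynomial (Fin p) R)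

lemma rhs_eq :
    shuffleMul d n (m + p) f₁ (shuffleMul d m p f₂ f₃)
      = ∑ q : PairIdx (n + (m + p)) n m, trm d n m p f₁ f₂ f₃ q := by
  rw [shuffleMul_eq_sum, ← Equiv.sum_comp (ΨR n m p) (trm d n m p f₁ f₂ f₃),
    Fintype.sum_prod_type]
  refine Finset.sum_congr rfl fun A _ => ?_
  have pfA : (A.1ᶜ).card = m + p := by rw [card_compl_fin A.2]; omega
  rw [rename_shuffleMul _ ((A.1ᶜ).orderEmbOfFin pfA).strictMono d f₂ f₃,
    Finset.mul_sum, Finset.sum_mul]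
  refine Finset.sum_congr rfl fun u _ => ?_
  set g : Fin (m + p) → Fin (n + (m + p)) := ⇑((A.1ᶜ).orderEmbOfFin pfA) with hgdef
  have ginj : Function.Injective g := ((A.1ᶜ).orderEmbOfFin pfA).injective
  set B : Finset (Fin (n + (m + p))) := u.1.image g with hBdef
  have hUg : Finset.univ.image g = A.1ᶜ := image_univ_orderEmbOfFin _ _
  have hC : (u.1ᶜ).image g = (A.1 ∪ B)ᶜ := by
    rw [image_compl_of_injective ginj, hUg, Finset.compl_union, sdiff_eq, hBdef]
    rfl
  have hAc : A.1ᶜ = B ∪ (A.1 ∪ B)ᶜ := by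
    rw [← hC, ← Finset.image_union, Finset.union_compl, hUg]
  have hdisjBC : Disjoint B ((A.1 ∪ B)ᶜ) := by
    rw [← hC]
    exact (Finset.disjoint_image ginj).mpr disjoint_compl_right
  have hCcard : ((A.1 ∪ B)ᶜ).card = p := by
    rw [← hC, Finset.card_image_of_injective _ ginj, Finset.card_compl, u.2,
      Fintype.card_fin]; omega
  have hren : rename (⇑(((u.1ᶜ).image g).orderEmbOfFin
        (by rw [Finset.card_image_of_injective _ ginj, Finset.card_compl, u.2,
            Fintype.card_fin]; omega))) f₃
      = rename (⇑(((A.1 ∪ B)ᶜ).orderEmbOfFin hCcard)) f₃ :=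
    rename_orderEmbOfFin_congr hC _ _ f₃
  conv_lhs => rw [hren, hC, show chKer R d A.1 A.1ᶜ
    = chKer R d A.1 B * chKer R d A.1 (A.1 ∪ B)ᶜ from by
      conv_lhs => rw [hAc]
      exact chKer_union_right d A.1 hdisjBC]
  show _ = trm d n m p f₁ f₂ f₃ (ΨR n m p (A, u))
  simp only [trm, ΨR, Equiv.coe_fn_mk]
  ring

lemma lhs_eq :
    rename (⇑(eA n m p)) (shuffleMul d (n + m) p (shuffleMul d n m f₁ f₂) f₃)
      = ∑ q : PairIdx (n + (m + p)) n m, trm d n m p f₁ f₂ f₃ q := by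
  rw [rename_shuffleMul _ (eA_strictMono n m p) d _ f₃,
    ← Equiv.sum_comp (ΦL n m p) (trm d n m p f₁ f₂ f₃), Fintype.sum_prod_type]
  refine Finset.sum_congr rfl fun S _ => ?_
  rw [rename_shuffleMul (gL n m p S.1 S.2)
      ((S.1.image ⇑(eA n m p)).orderEmbOfFin (card_image_eA n m p S.2)).strictMono d f₁ f₂,
    Finset.sum_mul, Finset.sum_mul]
  refine Finset.sum_congr rfl fun t _ => ?_
  have ginj : Function.Injective (gL n m p S.1 S.2) := gL_inj n m p S.1 S.2
  have hU : Finset.univ.image (gL n m p S.1 S.2) = S.1.image ⇑(eA n m p) :=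
    gL_image_univ n m p S.1 S.2
  have hS' : t.1.image (gL n m p S.1 S.2) ∪ (t.1ᶜ).image (gL n m p S.1 S.2)
      = S.1.image ⇑(eA n m p) := by
    rw [← Finset.image_union, Finset.union_compl, hU]
  have hCset : (S.1ᶜ).image ⇑(eA n m p)
      = (t.1.image (gL n m p S.1 S.2) ∪ (t.1ᶜ).image (gL n m p S.1 S.2))ᶜ := by
    rw [image_compl_equiv (eA n m p) S.1, hS']
  have hcardC : ((t.1.image (gL n m p S.1 S.2) ∪ (t.1ᶜ).image (gL n m p S.1 S.2))ᶜ).card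
      = p := by
    rw [← hCset, Finset.card_image_of_injective _ (eA n m p).injective, Finset.card_compl,
      S.2, Fintype.card_fin]; omega
  have hrenC : rename (⇑(((S.1ᶜ).image ⇑(eA n m p)).orderEmbOfFin
        (by rw [Finset.card_image_of_injective _ (eA_strictMono n m p).injective,
            Finset.card_compl, S.2, Fintype.card_fin]; omega))) f₃
      = rename (⇑(((t.1.image (gL n m p S.1 S.2) ∪
          (t.1ᶜ).image (gL n m p S.1 S.2))ᶜ).orderEmbOfFin hcardC)) f₃ :=
    rename_orderEmbOfFin_congr hCset _ _ f₃
  have hsplit : chKer R d (S.1.image ⇑(eA n m p))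
        ((t.1.image (gL n m p S.1 S.2) ∪ (t.1ᶜ).image (gL n m p S.1 S.2))ᶜ)
      = chKer R d (t.1.image (gL n m p S.1 S.2))
          ((t.1.image (gL n m p S.1 S.2) ∪ (t.1ᶜ).image (gL n m p S.1 S.2))ᶜ) *
        chKer R d ((t.1ᶜ).image (gL n m p S.1 S.2))
          ((t.1.image (gL n m p S.1 S.2) ∪ (t.1ᶜ).image (gL n m p S.1 S.2))ᶜ) := by
    conv_lhs => rw [← hS']
    exact chKer_union_left d _ ((Finset.disjoint_image ginj).mpr disjoint_compl_right)
  conv_lhs => rw [hrenC, hCset, hsplit]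
  show _ = trm d n m p f₁ f₂ f₃ (ΦL n m p (S, t))
  simp only [trm, ΦL, Equiv.coe_fn_mk]
  ring

end MainLemmas

/-- Associativity of the shuffle product. -/
theorem shuffleMul_assoc {R : Type*} [CommRing R] (d : ℕ) (hd : 1 ≤ d)
    (n m p : ℕ)
    (f₁ : MvPolynomial (Fin n) R) (f₂ : MvPolynomial (Fin m) R)
    (f₃ : MvPolynomial (Fin p) R)
    (h₁ : f₁.IsSymmetric) (h₂ : f₂.IsSymmetric) (h₃ : f₃.IsSymmetric) :
    rename (finCongr (Nat.add_assoc n m p))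
        (shuffleMul d (n + m) p (shuffleMul d n m f₁ f₂) f₃) =
      shuffleMul d n (m + p) f₁ (shuffleMul d m p f₂ f₃) := by
  exact (lhs_eq d n m p f₁ f₂ f₃).trans (rhs_eq d n m p f₁ f₂ f₃).symm
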